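/- arXiv:1210.6538 — 2 statements merged into one kernel-verified Lean document; each statement's English description precedes it below -/
import Mathlib

section
/- In any Brouwer algebra B, the equation ((a → b) ⊗ a) ⊕ a = ((a → b) ⊗ a) ⊕ b ⊕ a fails to witness the weak law of excluded middle in general, but in the Muchnik lattice the weak law of excluded middle holds: for every mass problem A, (A → 1) ⊗ ((A → 1) → 1) ≡_w 0, where 0 is the class of mass problems containing a computable function and 1 is the degree of the empty mass problem. -/
/-- `RecursiveIn O f` means the partial function `f : ℕ →. ℕ` is partial recursive
relative to the oracle `O : ℕ →. ℕ`. -/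
inductive RecursiveIn' (O : ℕ →. ℕ) : (ℕ →. ℕ) → Prop
  | oracle : RecursiveIn' O O
  | zero : RecursiveIn' O (pure 0)
  | succ : RecursiveIn' O Nat.succ
  | left : RecursiveIn' O fun n => (Nat.unpair n).1
  | right : RecursiveIn' O fun n => (Nat.unpair n).2
  | pair {f g : ℕ →. ℕ} : RecursiveIn' O f → RecursiveIn' O g →
      RecursiveIn' O fun n => Nat.pair <$> f n <*> g n
  | comp {f g : ℕ →. ℕ} : RecursiveIn' O f → RecursiveIn' O g →
      RecursiveIn' O fun n => g n >>= f
  | prec {f g : ℕ →. ℕ} : RecursiveIn' O f → RecursiveIn' O g →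
      RecursiveIn' O (Nat.unpaired fun a n =>
        n.rec (f a) fun y IH => do let i ← IH; g (Nat.pair a (Nat.pair y i)))
  | rfind {f : ℕ →. ℕ} : RecursiveIn' O f →
      RecursiveIn' O fun a => Nat.rfind fun n => (fun m => m = 0) <$> f (Nat.pair a n)

/-- Turing reducibility on total functions in Baire space. -/
def TuringLE (f g : ℕ → ℕ) : Prop := RecursiveIn' (↑g) (↑f)

/-- Turing equivalence. -/
def TuringEquiv (f g : ℕ → ℕ) : Prop := TuringLE f g ∧ TuringLE g f

/-- The join `f ⊕ g` of two elements of Baire space. -/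
def fjoin (f g : ℕ → ℕ) : ℕ → ℕ := fun n => if n % 2 = 0 then f (n / 2) else g (n / 2)

/-- Muchnik reducibility on mass problems. -/
def MuchnikLE (A B : Set (ℕ → ℕ)) : Prop := ∀ g ∈ B, ∃ f ∈ A, TuringLE f g

/-- Muchnik equivalence. -/
def MuchnikEquiv (A B : Set (ℕ → ℕ)) : Prop := MuchnikLE A B ∧ MuchnikLE B A

/-- The join `A ⊕ B` of two mass problems. -/
def mjoin (A B : Set (ℕ → ℕ)) : Set (ℕ → ℕ) :=
  {h | ∃ f ∈ A, ∃ g ∈ B, h = fjoin f g}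

/-- Muchnik implication `A → B`. -/
def mimp (A B : Set (ℕ → ℕ)) : Set (ℕ → ℕ) :=
  {g | ∀ f ∈ A, ∃ h ∈ B, TuringLE h (fjoin f g)}

/-- The upwards Turing closure of a mass problem. -/
def upClosure (A : Set (ℕ → ℕ)) : Set (ℕ → ℕ) := {f | ∃ g ∈ A, TuringLE g f}

/-- The weak law of the excluded middle holds in the Muchnik lattice: for every mass
problem `A`, the mass problem `(A → 1) ⊗ ((A → 1) → 1)` is Muchnik equivalent to the
least degree `0` (the degree of `ω^ω`, the class of mass problems containing a computable
function), where `1` is the degree of the empty mass problem, `⊗` is the meet (union) and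
`→` is Muchnik implication. -/
theorem muchnik_weak_lem (A : Set (ℕ → ℕ)) :
    MuchnikEquiv ((mimp A ∅) ∪ (mimp (mimp A ∅) ∅)) (Set.univ : Set (ℕ → ℕ)) := by
  constructor
  · intro g _
    refine ⟨g, ?_, RecursiveIn'.oracle⟩
    rcases A.eq_empty_or_nonempty with h | ⟨a, ha⟩
    · left; intro f hf; simp [h] at hf
    · right; intro f hf
      exact absurd (hf a ha) (by simp)
  · intro g _
    exact ⟨g, trivial, RecursiveIn'.oracle⟩
end

section
/- Let A ⊆ ω^ω be a non-empty countable class downwards closed under Turing reducibility. Suppose: (a) for every f ∈ A there exists h ∈ A with h ≰_T f; and (b) for every f ∈ A, every finite B ⊆ {g ∈ A : g ≰_T f}, and every h₀ ∈ A with h₀ ≰_T f, there exists h₁ ∈ A with h₁ >_T f, h₀ ⊕ h₁ ∉ A, and h₁ ≱_T g for all g ∈ B. Then for every f ∈ A and every finite B ⊆ {g ∈ A : g ≰_T f} there exists h ∈ A with h >_T f and g ⊕ h ∉ A for all g ∈ B. -/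
lemma recIn_of_partrec {O f} (h : Nat.Partrec f) : RecursiveIn' O f := by
  induction h with
  | zero => exact .zero
  | succ => exact .succ
  | left => exact .left
  | right => exact .right
  | pair _ _ ih1 ih2 => exact .pair ih1 ih2
  | comp _ _ ih1 ih2 => exact .comp ih1 ih2
  | prec _ _ ih1 ih2 => exact .prec ih1 ih2
  | rfind _ ih => exact .rfind ih

lemma recIn_trans {O O' f} (hf : RecursiveIn' O f) (hO : RecursiveIn' O' O) :
    RecursiveIn' O' f := by
  induction hf with
  | oracle => exact hO
  | zero => exact .zero
  | succ => exact .succ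
  | left => exact .left
  | right => exact .right
  | pair _ _ ih1 ih2 => exact .pair ih1 ih2
  | comp _ _ ih1 ih2 => exact .comp ih1 ih2
  | prec _ _ ih1 ih2 => exact .prec ih1 ih2
  | rfind _ ih => exact .rfind ih

lemma turingLE_refl (f : ℕ → ℕ) : TuringLE f f := RecursiveIn'.oracle

lemma turingLE_trans {a b c : ℕ → ℕ} (h1 : TuringLE a b) (h2 : TuringLE b c) :
    TuringLE a c := recIn_trans h1 h2

-- compose a total primrec function before the oracle
lemma recIn_comp_total {O : ℕ →. ℕ} {f : ℕ →. ℕ} {u : ℕ → ℕ}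
    (hf : RecursiveIn' O f) (hu : Primrec u) :
    RecursiveIn' O (fun n => f (u n)) := by
  have := RecursiveIn'.comp hf (recIn_of_partrec (O := O)
    (Nat.Partrec.of_primrec (Primrec.nat_iff.mp hu)))
  have e : ∀ n, (Part.some (u n) >>= f) = f (u n) := fun n => Part.bind_some _ _
  simpa [e] using this

lemma left_le_fjoin (g h : ℕ → ℕ) : TuringLE g (fjoin g h) := by
  have := recIn_comp_total (O := ↑(fjoin g h)) (f := ↑(fjoin g h))
    RecursiveIn'.oracle Primrec.nat_double
  have he : (fun n => (↑(fjoin g h) : ℕ →. ℕ) (2 * n)) = (↑g : ℕ →. ℕ) := by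
    funext n
    simp [fjoin, Nat.mul_div_cancel_left, Nat.mul_mod_right]
  rwa [he] at this

lemma right_le_fjoin (g h : ℕ → ℕ) : TuringLE h (fjoin g h) := by
  have hu : Primrec (fun n : ℕ => 2 * n + 1) := Primrec.succ.comp Primrec.nat_double
  have := recIn_comp_total (O := ↑(fjoin g h)) (f := ↑(fjoin g h))
    RecursiveIn'.oracle hu
  have he : (fun n => (↑(fjoin g h) : ℕ →. ℕ) (2 * n + 1)) = (↑h : ℕ →. ℕ) := by
    funext n
    have h1 : (2 * n + 1) % 2 = 1 := by omega
    have h2 : (2 * n + 1) / 2 = n := by omega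
    simp [fjoin, h1, h2]
  rwa [he] at this

lemma fjoin_le {a b c : ℕ → ℕ} (h1 : TuringLE a c) (h2 : TuringLE b c) :
    TuringLE (fjoin a b) c := by
  -- p1 n = a (n/2), p2 n = b (n/2)
  have hdiv : Primrec (fun n : ℕ => n / 2) := Primrec.nat_div.comp .id (.const 2)
  have p1 := recIn_comp_total h1 hdiv
  have p2 := recIn_comp_total h2 hdiv
  have hid : RecursiveIn' (↑c) (fun n => Part.some n) := by
    have := recIn_of_partrec (O := ↑c) (Nat.Partrec.of_primrec Nat.Primrec.id)
    exact this
  have q := RecursiveIn'.pair p1 p2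
  have r := RecursiveIn'.pair hid q
  -- r n = some (pair n (pair (a (n/2)) (b (n/2))))
  set d : ℕ → ℕ := fun m =>
    if (Nat.unpair m).1 % 2 = 0 then (Nat.unpair (Nat.unpair m).2).1
    else (Nat.unpair (Nat.unpair m).2).2 with hd
  have hdp : Primrec d := by
    have u1 : Primrec fun m : ℕ => (Nat.unpair m).1 := Primrec.fst.comp Primrec.unpair
    have u2 : Primrec fun m : ℕ => (Nat.unpair m).2 := Primrec.snd.comp Primrec.unpair
    exact Primrec.ite
      (PrimrecPred.comp (Primrec.eq.comp (Primrec.nat_mod.comp u1 (.const 2)) (.const 0)) .id)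
      (u1.comp u2) (u2.comp u2)
  have final := RecursiveIn'.comp (recIn_of_partrec (O := ↑c)
    (Nat.Partrec.of_primrec (Primrec.nat_iff.mp hdp))) r
  have he : (fun n => (fun n => Nat.pair <$> (fun n => Part.some n) n <*>
      (fun n => Nat.pair <$> (↑a : ℕ →. ℕ) (n / 2) <*> (↑b : ℕ →. ℕ) (n / 2)) n) n >>= (↑d : ℕ →. ℕ))
      = (↑(fjoin a b) : ℕ →. ℕ) := by
    funext n
    simp [Seq.seq, d, fjoin]
    refine (Part.bind_some _ _).trans ?_
    simp
  rwa [he] at final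
lemma fjoin_mono_right {g h₁ h₂ : ℕ → ℕ} (hle : TuringLE h₁ h₂) :
    TuringLE (fjoin g h₁) (fjoin g h₂) :=
  fjoin_le (left_le_fjoin g h₂) (turingLE_trans hle (right_le_fjoin g h₂))

/-- Condition (iii) implies condition (ii) of Proposition 3.2: if (a) above every `f ∈ A`
there is `h ∈ A` with `h ≰_T f`, and (b) for every `f ∈ A`, finite
`B ⊆ {g ∈ A : g ≰_T f}` and `h₀ ∈ A` with `h₀ ≰_T f` there is `h₁ ∈ A` strictly above `f`
with `h₀ ⊕ h₁ ∉ A` and `h₁ ≱_T g` for all `g ∈ B`, then for every `f ∈ A` and finite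
`B ⊆ {g ∈ A : g ≰_T f}` there is `h ∈ A` strictly above `f` with `g ⊕ h ∉ A` for all
`g ∈ B`. -/
theorem strict_extension_of_avoiding (A : Set (ℕ → ℕ))
    (hne : A.Nonempty) (hct : A.Countable)
    (hdc : ∀ f ∈ A, ∀ g : ℕ → ℕ, TuringLE g f → g ∈ A)
    (ha : ∀ f ∈ A, ∃ h ∈ A, ¬ TuringLE h f)
    (hb : ∀ f ∈ A, ∀ B : Set (ℕ → ℕ), B.Finite → B ⊆ {g | g ∈ A ∧ ¬ TuringLE g f} →
      ∀ h₀ ∈ A, ¬ TuringLE h₀ f →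
        ∃ h₁ ∈ A, (TuringLE f h₁ ∧ ¬ TuringLE h₁ f) ∧ fjoin h₀ h₁ ∉ A ∧
          ∀ g ∈ B, ¬ TuringLE g h₁) :
    ∀ f ∈ A, ∀ B : Set (ℕ → ℕ), B.Finite → B ⊆ {g | g ∈ A ∧ ¬ TuringLE g f} →
      ∃ h ∈ A, (TuringLE f h ∧ ¬ TuringLE h f) ∧ ∀ g ∈ B, fjoin g h ∉ A := by
  have key : ∀ B : Set (ℕ → ℕ), B.Finite → ∀ f ∈ A,
      B ⊆ {g | g ∈ A ∧ ¬ TuringLE g f} →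
      ∃ h ∈ A, (TuringLE f h ∧ ¬ TuringLE h f) ∧ ∀ g ∈ B, fjoin g h ∉ A := by
    intro B hB
    induction B, hB using Set.Finite.induction_on with
    | empty =>
      intro f hf _
      obtain ⟨h₀, h₀A, h₀f⟩ := ha f hf
      obtain ⟨h₁, h₁A, hlt, -, -⟩ :=
        hb f hf ∅ Set.finite_empty (by simp) h₀ h₀A h₀f
      exact ⟨h₁, h₁A, hlt, by simp⟩
    | @insert a s hns hsfin ih =>
      intro f hf hsub
      obtain ⟨haA, haf⟩ := hsub (Set.mem_insert a s)
      obtain ⟨h₁, h₁A, ⟨hfh₁, hh₁f⟩, hja, hav⟩ :=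
        hb f hf (insert a s) (hsfin.insert a) hsub a haA haf
      obtain ⟨h, hA, ⟨hh₁h, hhh₁⟩, hjoin⟩ := ih h₁ h₁A (by
        intro g hg
        exact ⟨(hsub (Set.mem_insert_of_mem a hg)).1,
          hav g (Set.mem_insert_of_mem a hg)⟩)
      refine ⟨h, hA, ⟨turingLE_trans hfh₁ hh₁h, fun hc => hh₁f ?_⟩, ?_⟩
      · exact absurd (turingLE_trans hc hfh₁) hhh₁
      · intro g hg
        rcases Set.mem_insert_iff.mp hg with rfl | hg'
        · intro hmem
          exact hja (hdc _ hmem _ (fjoin_mono_right hh₁h))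
        · exact hjoin g hg'
  intro f hf B hB hsub
  exact key B hB f hf hsub
end
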